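/- (Hessian of the log-Frobenius-condition number under left multiplication.) Let A be an invertible n×n complex matrix, let H be a Hermitian n×n complex matrix, and set P = AA*. Then the function φ(t) = log ‖e^{tH} A‖_F + log ‖A⁻¹ e^{-tH}‖_F is twice differentiable at t = 0 and (1/2)·φ''(0) = Re tr(H²P)/tr(P) − (Re tr(HP))²/(tr P)² + Re tr(H²P⁻¹)/tr(P⁻¹) − (Re tr(HP⁻¹))²/(tr P⁻¹)², where tr(P) and tr(P⁻¹) denote the (real, positive) traces of the positive definite matrices P and P⁻¹. -/

import Mathlib

open Matrix

/-- The matrix exponential of a square complex matrix. -/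
noncomputable def mexp {k : ℕ} (A : Matrix (Fin k) (Fin k) ℂ) : Matrix (Fin k) (Fin k) ℂ :=
  NormedSpace.exp A

/-- The Frobenius norm `‖A‖_F = √(tr(A*A))` of a complex matrix. -/
noncomputable def frob {m n : ℕ} (A : Matrix (Fin m) (Fin n) ℂ) : ℝ :=
  Real.sqrt (Matrix.trace (Aᴴ * A)).re

section Aux

open NormedSpace

section WithNorm

attribute [local instance] Matrix.linftyOpSemiNormedRing Matrix.linftyOpNormedRing
  Matrix.linftyOpNormedAlgebra

variable {n : ℕ}

/-- `X ↦ Re (tr (X * B))` as a continuous `ℝ`-linear map. -/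
noncomputable def trReCLM (B : Matrix (Fin n) (Fin n) ℂ) :
    Matrix (Fin n) (Fin n) ℂ →L[ℝ] ℝ :=
  LinearMap.toContinuousLinearMap
    (Complex.reLm.comp
      (((Matrix.traceLinearMap (Fin n) ℂ ℂ).restrictScalars ℝ).comp
        ((LinearMap.mulRight ℂ B).restrictScalars ℝ)))

theorem hasDerivAt_traceExpRe_aux (C B : Matrix (Fin n) (Fin n) ℂ) (t : ℝ) :
    HasDerivAt (fun u : ℝ => ((NormedSpace.exp (u • C) * B).trace).re)
      (((NormedSpace.exp (t • C) * (C * B)).trace).re) t := by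
  have h1 : HasDerivAt (fun u : ℝ => exp (u • C)) (C * exp (t • C)) t := by
    have := hasDerivAt_exp_smul_const' (𝕂 := ℝ) C t
    exact this
  have h2 := (trReCLM B).hasFDerivAt.comp_hasDerivAt t h1
  have hc : C * exp (t • C) = exp (t • C) * C :=
    ((Commute.refl C).smul_right t).exp_right
  refine HasDerivAt.congr_deriv (f := fun u : ℝ => ((NormedSpace.exp (u • C) * B).trace).re) h2 (Eq.symm ?_)
  show _ = ((C * exp (t • C)) * B).trace.re
  rw [hc, mul_assoc]

end WithNorm

variable {n : ℕ}

theorem hasDerivAt_traceExpRe (C B : Matrix (Fin n) (Fin n) ℂ) (t : ℝ) :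
    HasDerivAt (fun u : ℝ => ((NormedSpace.exp (u • C) * B).trace).re)
      (((NormedSpace.exp (t • C) * (C * B)).trace).re) t :=
  hasDerivAt_traceExpRe_aux C B t

theorem trace_re_pos {B : Matrix (Fin n) (Fin n) ℂ} (hB : B ≠ 0) :
    0 < ((Bᴴ * B).trace).re := by
  classical
  have h : ((Bᴴ * B).trace).re = ∑ i, ∑ j, Complex.normSq (B j i) := by
    simp [Matrix.trace, Matrix.mul_apply, Complex.normSq_apply, Complex.mul_re]
  rw [h]
  obtain ⟨j, i, hji⟩ : ∃ j i, B j i ≠ 0 := by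
    by_contra hcon
    push_neg at hcon
    exact hB (by ext j i; simp [hcon])
  exact Finset.sum_pos' (fun i _ => Finset.sum_nonneg fun j _ => Complex.normSq_nonneg _)
    ⟨i, Finset.mem_univ _, Finset.sum_pos'
      (fun _ _ => Complex.normSq_nonneg _) ⟨j, Finset.mem_univ _, Complex.normSq_pos.2 hji⟩⟩

end Aux

section Main

open NormedSpace

theorem hessian_log_kappaF_left (n : ℕ) (A : Matrix (Fin n) (Fin n) ℂ) (hA : IsUnit A)
    (H : Matrix (Fin n) (Fin n) ℂ) (hH : H.IsHermitian) :
    let φ : ℝ → ℝ := fun t =>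
      Real.log (frob (mexp ((t : ℂ) • H) * A)) +
      Real.log (frob (A⁻¹ * mexp ((-t : ℂ) • H)))
    let P : Matrix (Fin n) (Fin n) ℂ := A * Aᴴ
    DifferentiableAt ℝ φ 0 ∧ DifferentiableAt ℝ (deriv φ) 0 ∧
      (1 / 2) * deriv (deriv φ) 0 =
        (Matrix.trace (H * H * P)).re / (Matrix.trace P).re -
          (Matrix.trace (H * P)).re ^ 2 / (Matrix.trace P).re ^ 2 +
        (Matrix.trace (H * H * P⁻¹)).re / (Matrix.trace P⁻¹).re -
          (Matrix.trace (H * P⁻¹)).re ^ 2 / (Matrix.trace P⁻¹).re ^ 2 := by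
  intro φ P
  rcases Nat.eq_zero_or_pos n with hn | hn
  · subst hn
    have hφ0 : φ = fun _ => (0 : ℝ) := by
      funext t
      show Real.log _ + Real.log _ = 0
      simp [frob, Matrix.trace]
    have hP0 : (Matrix.trace P).re = 0 := by simp [Matrix.trace]
    have hP0' : (Matrix.trace P⁻¹).re = 0 := by simp [Matrix.trace]
    have hHH : (Matrix.trace (H * H * P)).re = 0 := by simp [Matrix.trace]
    have hHH' : (Matrix.trace (H * H * P⁻¹)).re = 0 := by simp [Matrix.trace]
    have hHP : (Matrix.trace (H * P)).re = 0 := by simp [Matrix.trace]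
    have hHP' : (Matrix.trace (H * P⁻¹)).re = 0 := by simp [Matrix.trace]
    rw [hφ0, hP0, hP0', hHH, hHH', hHP, hHP']
    refine ⟨differentiableAt_const _, ?_, ?_⟩
    · rw [deriv_const']; exact differentiableAt_const _
    · rw [deriv_const', deriv_const']; norm_num
  haveI : Nonempty (Fin n) := ⟨⟨0, hn⟩⟩
  haveI : Nontrivial (Matrix (Fin n) (Fin n) ℂ) := by
    refine nontrivial_of_ne 1 0 fun h => ?_
    have := congrFun (congrFun h ⟨0, hn⟩) ⟨0, hn⟩
    simp [Matrix.one_apply] at this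
  -- abbreviations
  set C : Matrix (Fin n) (Fin n) ℂ := (2 : ℂ) • H with hC
  set D : Matrix (Fin n) (Fin n) ℂ := (-2 : ℂ) • H with hD
  set Q : Matrix (Fin n) (Fin n) ℂ := P⁻¹ with hQ
  set f : ℝ → ℝ := fun t => ((exp (t • C) * P).trace).re with hfdef
  set f1 : ℝ → ℝ := fun t => ((exp (t • C) * (C * P)).trace).re with hf1def
  set g : ℝ → ℝ := fun t => ((exp (t • D) * Q).trace).re with hgdef
  set g1 : ℝ → ℝ := fun t => ((exp (t • D) * (D * Q)).trace).re with hg1def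
  have hf : ∀ t, HasDerivAt f (f1 t) t := fun t => hasDerivAt_traceExpRe C P t
  have hf1 : ∀ t, HasDerivAt f1 (((exp (t • C) * (C * (C * P))).trace).re) t :=
    fun t => hasDerivAt_traceExpRe C (C * P) t
  have hg : ∀ t, HasDerivAt g (g1 t) t := fun t => hasDerivAt_traceExpRe D Q t
  have hg1 : ∀ t, HasDerivAt g1 (((exp (t • D) * (D * (D * Q))).trace).re) t :=
    fun t => hasDerivAt_traceExpRe D (D * Q) t
  -- hermitian exponentials
  have hEH : ∀ s : ℝ, (mexp ((s : ℂ) • H))ᴴ = mexp ((s : ℂ) • H) := by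
    intro s
    simp only [mexp]
    rw [← Matrix.exp_conjTranspose]
    congr 1
    simp [Matrix.conjTranspose_smul, hH.eq, Complex.star_def, Complex.conj_ofReal]
  have hEH' : ∀ t : ℝ, (mexp ((-t : ℂ) • H))ᴴ = mexp ((-t : ℂ) • H) := by
    intro t
    have := hEH (-t)
    rwa [Complex.ofReal_neg] at this
  -- products of exponentials
  have hsum : ∀ t : ℝ, t • C = (t : ℂ) • H + (t : ℂ) • H := by
    intro t
    calc t • C = (2 : ℂ) • (t • H) := by rw [hC]; exact smul_comm _ _ _
      _ = (2 : ℂ) • ((t : ℂ) • H) := by rw [Complex.coe_smul]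
      _ = ((2 * t : ℂ)) • H := smul_smul _ _ _
      _ = (t : ℂ) • H + (t : ℂ) • H := by rw [← add_smul]; ring_nf
  have hsum' : ∀ t : ℝ, t • D = (-t : ℂ) • H + (-t : ℂ) • H := by
    intro t
    calc t • D = (-2 : ℂ) • (t • H) := by rw [hD]; exact smul_comm _ _ _
      _ = (-2 : ℂ) • ((t : ℂ) • H) := by rw [Complex.coe_smul]
      _ = ((-2 * t : ℂ)) • H := smul_smul _ _ _
      _ = (-t : ℂ) • H + (-t : ℂ) • H := by rw [← add_smul]; ring_nf
  have hEE : ∀ t : ℝ, mexp ((t : ℂ) • H) * mexp ((t : ℂ) • H) = exp (t • C) := by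
    intro t
    simp only [mexp]
    rw [← Matrix.exp_add_of_commute _ _ (Commute.refl _), ← hsum t]
  have hEE' : ∀ t : ℝ, mexp ((-t : ℂ) • H) * mexp ((-t : ℂ) • H) = exp (t • D) := by
    intro t
    simp only [mexp]
    rw [← Matrix.exp_add_of_commute _ _ (Commute.refl _), ← hsum' t]
  -- trace identities
  have hfeq : ∀ t : ℝ,
      ((mexp ((t : ℂ) • H) * A)ᴴ * (mexp ((t : ℂ) • H) * A)).trace
        = (exp (t • C) * P).trace := by
    intro t
    set E := mexp ((t : ℂ) • H) with hE
    calc ((E * A)ᴴ * (E * A)).trace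
        = (Aᴴ * (E * (E * A))).trace := by
          rw [Matrix.conjTranspose_mul, hEH t]; simp only [Matrix.mul_assoc]; rfl
      _ = ((E * (E * A)) * Aᴴ).trace := Matrix.trace_mul_comm _ _
      _ = ((E * E) * (A * Aᴴ)).trace := by simp only [Matrix.mul_assoc]
      _ = (exp (t • C) * P).trace := by rw [hEE t]
  have hQeq : (A⁻¹)ᴴ * A⁻¹ = Q := by
    rw [hQ, Matrix.mul_inv_rev, Matrix.conjTranspose_nonsing_inv]
  have hgeq : ∀ t : ℝ,
      ((A⁻¹ * mexp ((-t : ℂ) • H))ᴴ * (A⁻¹ * mexp ((-t : ℂ) • H))).trace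
        = (exp (t • D) * Q).trace := by
    intro t
    set E := mexp ((-t : ℂ) • H) with hE
    calc ((A⁻¹ * E)ᴴ * (A⁻¹ * E)).trace
        = ((E * ((A⁻¹)ᴴ * A⁻¹)) * E).trace := by
          rw [Matrix.conjTranspose_mul, hEH' t]; simp only [Matrix.mul_assoc]; rfl
      _ = ((E * (E * ((A⁻¹)ᴴ * A⁻¹)))).trace := Matrix.trace_mul_comm _ _
      _ = ((E * E) * ((A⁻¹)ᴴ * A⁻¹)).trace := by simp only [Matrix.mul_assoc]
      _ = (exp (t • D) * Q).trace := by rw [hEE' t, hQeq]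
  -- positivity
  have hfpos : ∀ t, 0 < f t := by
    intro t
    have hne : mexp ((t : ℂ) • H) * A ≠ 0 := by
      have hu : IsUnit (mexp ((t : ℂ) • H) * A) := by
        simp only [mexp]; exact (Matrix.isUnit_exp _).mul hA
      exact hu.ne_zero
    have := trace_re_pos hne
    rwa [hfeq t] at this
  have hgpos : ∀ t, 0 < g t := by
    intro t
    have hne : A⁻¹ * mexp ((-t : ℂ) • H) ≠ 0 := by
      have hu : IsUnit (A⁻¹ * mexp ((-t : ℂ) • H)) := by
        simp only [mexp]
        exact (Matrix.isUnit_nonsing_inv_iff.2 hA).mul (Matrix.isUnit_exp _)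
      exact hu.ne_zero
    have := trace_re_pos hne
    rwa [hgeq t] at this
  -- rewrite φ
  have hφ : φ = fun t => Real.log (f t) / 2 + Real.log (g t) / 2 := by
    funext t
    show Real.log (frob (mexp ((t : ℂ) • H) * A)) +
        Real.log (frob (A⁻¹ * mexp ((-t : ℂ) • H))) = _
    rw [frob, frob, hfeq t, hgeq t, Real.log_sqrt (hfpos t).le, Real.log_sqrt (hgpos t).le]
  -- first derivative
  have hφ' : ∀ t, HasDerivAt φ (f1 t / f t / 2 + g1 t / g t / 2) t := by
    intro t
    rw [hφ]
    exact (((hf t).log (hfpos t).ne').div_const 2).add (((hg t).log (hgpos t).ne').div_const 2)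
  have hd1 : DifferentiableAt ℝ φ 0 := (hφ' 0).differentiableAt
  have hderiv : deriv φ = fun t => f1 t / f t / 2 + g1 t / g t / 2 :=
    funext fun t => (hφ' t).deriv
  -- second derivative at 0
  have hψ : HasDerivAt (fun t => f1 t / f t / 2 + g1 t / g t / 2)
      (((((exp ((0:ℝ) • C) * (C * (C * P))).trace).re * f 0 - f1 0 * f1 0) / f 0 ^ 2) / 2 +
       ((((exp ((0:ℝ) • D) * (D * (D * Q))).trace).re * g 0 - g1 0 * g1 0) / g 0 ^ 2) / 2) 0 :=
    ((((hf1 0).div (hf 0) (hfpos 0).ne')).div_const 2).add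
      ((((hg1 0).div (hg 0) (hgpos 0).ne')).div_const 2)
  have hd2 : DifferentiableAt ℝ (deriv φ) 0 := by
    rw [hderiv]; exact hψ.differentiableAt
  have hval : deriv (deriv φ) 0 =
      ((((exp ((0:ℝ) • C) * (C * (C * P))).trace).re * f 0 - f1 0 * f1 0) / f 0 ^ 2) / 2 +
      ((((exp ((0:ℝ) • D) * (D * (D * Q))).trace).re * g 0 - g1 0 * g1 0) / g 0 ^ 2) / 2 := by
    rw [hderiv]; exact hψ.deriv
  refine ⟨hd1, hd2, ?_⟩
  rw [hval]
  -- values at 0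
  have hexp0 : exp ((0:ℝ) • C) = 1 := by rw [zero_smul, exp_zero]
  have hexp0' : exp ((0:ℝ) • D) = 1 := by rw [zero_smul, exp_zero]
  have hf0 : f 0 = (Matrix.trace P).re := by rw [hfdef]; simp only [hexp0, one_mul]
  have hg0 : g 0 = (Matrix.trace Q).re := by rw [hgdef]; simp only [hexp0', one_mul]
  have hf10 : f1 0 = 2 * (Matrix.trace (H * P)).re := by
    rw [hf1def]
    simp only [hexp0, one_mul, hC, smul_mul_assoc, Matrix.trace_smul, smul_eq_mul,
      Complex.mul_re]
    norm_num
  have hg10 : g1 0 = -2 * (Matrix.trace (H * Q)).re := by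
    rw [hg1def]
    simp only [hexp0', one_mul, hD, smul_mul_assoc, Matrix.trace_smul, smul_eq_mul,
      Complex.mul_re]
    norm_num
  have hf20 : ((exp ((0:ℝ) • C) * (C * (C * P))).trace).re
      = 4 * (Matrix.trace (H * H * P)).re := by
    simp only [hexp0, one_mul, hC, smul_mul_assoc, Matrix.mul_smul, Matrix.trace_smul,
      smul_eq_mul, Complex.mul_re, Complex.mul_im, ← Matrix.mul_assoc]
    norm_num
    ring
  have hg20 : ((exp ((0:ℝ) • D) * (D * (D * Q))).trace).re
      = 4 * (Matrix.trace (H * H * Q)).re := by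
    simp only [hexp0', one_mul, hD, smul_mul_assoc, Matrix.mul_smul, Matrix.trace_smul,
      smul_eq_mul, Complex.mul_re, Complex.mul_im, ← Matrix.mul_assoc]
    norm_num
    ring
  have hp : (Matrix.trace P).re ≠ 0 := by rw [← hf0]; exact (hfpos 0).ne'
  have hq : (Matrix.trace Q).re ≠ 0 := by rw [← hg0]; exact (hgpos 0).ne'
  rw [hf0, hg0, hf10, hg10, hf20, hg20]
  field_simp
  ring
end Main
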